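/- Let n ≥ 2. For every integer j ≥ 0 and every μ ∈ ℤ^n, the unrestricted one-dimensional sum of the level-1 perfect crystal of type D_{n+1}^{(2)} satisfies the three-term Weyl-reflection identity g_j(n, μ) + g_j(0, μ + e_n) + g_j(n̄, μ + 2e_n) = g_j(n, μ[μ_n ↦ −μ_n−2]) + g_j(0, μ[μ_n ↦ −μ_n−1]) + g_j(n̄, μ[μ_n ↦ −μ_n]), where μ[μ_n ↦ a] denotes the vector obtained from μ by replacing its last entry μ_n by a. (This is the case m = 2 of the Weyl-reflection identity for the classical index i = n and the element b = n, which satisfies φ_n(n) = 2 with f_n(n) = 0 and f_n^2(n) = n̄; the reflection r_n sends μ_n to −μ_n.) -/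

import Mathlib

open Finset

noncomputable section

/-- The indeterminate `q`, living in the field of rational functions `ℚ(q)`. -/
def q : RatFunc ℚ := RatFunc.X

/-! The level-1 perfect crystal of type `D_{n+1}^{(2)}` is
`B = {1,…,n,0,n̄,…,1̄,φ}` (with `2n+2` elements), where `B∖{φ}` is totally ordered by
`1 ≺ ⋯ ≺ n ≺ 0 ≺ n̄ ≺ ⋯ ≺ 1̄`. We encode it as `Fin (2n+2)`: position `p < n` is the
letter `p+1`, position `n` is the letter `0`, position `n+r` (`1 ≤ r ≤ n`) is the barred
letter `\overline{n+1-r}`, and position `2n+1` is `φ`. -/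

/-- The energy function: `H(b,b') = 0` if `b,b' ≠ φ` with `b ≺ b'`, or if
`(b,b') = (0,0)` or `(φ,φ)`; `H(b,b') = 1` if exactly one of `b,b'` is `φ`; and
`H(b,b') = 2` if `b,b' ≠ φ`, `b ⪰ b'` and `(b,b') ≠ (0,0)`. -/
def H (n : ℕ) (b b' : Fin (2 * n + 2)) : ℤ :=
  if (b : ℕ) = 2 * n + 1 ∧ (b' : ℕ) = 2 * n + 1 then 0
  else if (b : ℕ) = 2 * n + 1 ∨ (b' : ℕ) = 2 * n + 1 then 1
  else if (b : ℕ) = n ∧ (b' : ℕ) = n then 0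
  else if (b : ℕ) < (b' : ℕ) then 0 else 2

/-- Contents: the letter `k` (`1 ≤ k ≤ n`) has content `e_k`, the letter `k̄` has content
`-e_k`, and the letters `0` and `φ` have content `0`; here `ℤ^n` is indexed by `Fin n`,
with index `k-1` corresponding to `μ_k`. -/
def cont (n : ℕ) (b : Fin (2 * n + 2)) (k : Fin n) : ℤ :=
  if (b : ℕ) = (k : ℕ) then 1 else if (b : ℕ) = 2 * n - (k : ℕ) then -1 else 0

/-- The unrestricted one-dimensional sum `g_j(b,μ)`: the sum of
`q^{Σ_{i=1}^j i·H(b_{i+1},b_i)}` over all sequences `(b_1,…,b_j) ∈ B^j` of total content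
`μ`, with `b_{j+1} = b`. -/
def g (n j : ℕ) (b : Fin (2 * n + 2)) (μ : Fin n → ℤ) : RatFunc ℚ :=
  ∑ p ∈ Finset.univ.filter (fun p : Fin (j + 1) → Fin (2 * n + 2) =>
      p (Fin.last j) = b ∧
      ∀ k, (∑ i : Fin j, cont n (p i.castSucc) k) = μ k),
    q ^ (∑ i : Fin j, ((i : ℤ) + 1) * H n (p i.succ) (p i.castSucc))


lemma q_ne_zero : q ≠ 0 := RatFunc.X_ne_zero

/- ---------- basic defs ---------- -/
def sh (n : ℕ) (X : Fin n → ℤ) (a : ℤ) : Fin n → ℤ :=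
  fun k => if (k : ℕ) = n - 1 then X k + a else X k
def rr (n : ℕ) (X : Fin n → ℤ) : Fin n → ℤ :=
  fun k => if (k : ℕ) = n - 1 then -X k else X k
def bN (n : ℕ) : Fin (2*n+2) := ⟨n-1, by omega⟩
def bZ (n : ℕ) : Fin (2*n+2) := ⟨n, by omega⟩
def bNB (n : ℕ) : Fin (2*n+2) := ⟨2*n+1-n, by omega⟩
def Uu (n j : ℕ) (ν : Fin n → ℤ) : RatFunc ℚ :=
  g n j (bN n) (sh n ν (-1)) + g n j (bZ n) ν + g n j (bNB n) (sh n ν 1)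
def Tset (n : ℕ) : Finset (Fin (2*n+2)) :=
  Finset.univ.filter (fun c => (c:ℕ) ≠ n-1 ∧ (c:ℕ) ≠ n ∧ (c:ℕ) ≠ n+1)

lemma sh_sh (n : ℕ) (X : Fin n → ℤ) (a b : ℤ) : sh n (sh n X a) b = sh n X (a+b) := by
  funext k; simp only [sh]; split_ifs <;> ring
lemma sh_zero (n : ℕ) (X : Fin n → ℤ) : sh n X 0 = X := by
  funext k; simp only [sh]; split_ifs <;> ring
lemma rr_rr (n : ℕ) (X : Fin n → ℤ) : rr n (rr n X) = X := by
  funext k; simp only [rr]; split_ifs <;> ring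
lemma rr_sh (n : ℕ) (X : Fin n → ℤ) (a : ℤ) : rr n (sh n X a) = sh n (rr n X) (-a) := by
  funext k; simp only [rr, sh]; split_ifs <;> ring

/- ---------- H values ---------- -/
lemma H_NN (n : ℕ) (hn : 2 ≤ n) : H n (bN n) (bN n) = 2 := by
  simp only [H, bN, Fin.val_mk]; split_ifs <;> omega
lemma H_NZ (n : ℕ) (hn : 2 ≤ n) : H n (bN n) (bZ n) = 0 := by
  simp only [H, bN, bZ, Fin.val_mk]; split_ifs <;> omega
lemma H_NNB (n : ℕ) (hn : 2 ≤ n) : H n (bN n) (bNB n) = 0 := by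
  simp only [H, bN, bNB, Fin.val_mk]; split_ifs <;> omega
lemma H_ZN (n : ℕ) (hn : 2 ≤ n) : H n (bZ n) (bN n) = 2 := by
  simp only [H, bZ, bN, Fin.val_mk]; split_ifs <;> omega
lemma H_ZZ (n : ℕ) (hn : 2 ≤ n) : H n (bZ n) (bZ n) = 0 := by
  simp only [H, bZ, Fin.val_mk, and_self, ↓reduceIte]; split_ifs <;> omega
lemma H_ZNB (n : ℕ) (hn : 2 ≤ n) : H n (bZ n) (bNB n) = 0 := by
  simp only [H, bZ, bNB, Fin.val_mk]; split_ifs <;> omega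
lemma H_BN (n : ℕ) (hn : 2 ≤ n) : H n (bNB n) (bN n) = 2 := by
  simp only [H, bNB, bN, Fin.val_mk]; split_ifs <;> omega
lemma H_BZ (n : ℕ) (hn : 2 ≤ n) : H n (bNB n) (bZ n) = 2 := by
  simp only [H, bNB, bZ, Fin.val_mk]; split_ifs <;> omega
lemma H_BNB (n : ℕ) (hn : 2 ≤ n) : H n (bNB n) (bNB n) = 2 := by
  simp only [H, bNB, Fin.val_mk]; split_ifs <;> omega

lemma H_left_uniform (n : ℕ) (hn : 2 ≤ n) (b b' d : Fin (2*n+2))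
    (hb : (b:ℕ) = n-1 ∨ (b:ℕ) = n ∨ (b:ℕ) = n+1)
    (hb' : (b':ℕ) = n-1 ∨ (b':ℕ) = n ∨ (b':ℕ) = n+1)
    (hd1 : (d:ℕ) ≠ n-1) (hd2 : (d:ℕ) ≠ n) (hd3 : (d:ℕ) ≠ n+1) :
    H n b d = H n b' d := by
  have h1 := d.isLt; have h2 := b.isLt; have h3 := b'.isLt
  simp only [H]; split_ifs <;> omega
lemma H_right_uniform (n : ℕ) (hn : 2 ≤ n) (b b' d : Fin (2*n+2))
    (hb : (b:ℕ) = n-1 ∨ (b:ℕ) = n ∨ (b:ℕ) = n+1)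
    (hb' : (b':ℕ) = n-1 ∨ (b':ℕ) = n ∨ (b':ℕ) = n+1)
    (hd1 : (d:ℕ) ≠ n-1) (hd2 : (d:ℕ) ≠ n) (hd3 : (d:ℕ) ≠ n+1) :
    H n d b = H n d b' := by
  have h1 := d.isLt; have h2 := b.isLt; have h3 := b'.isLt
  simp only [H]; split_ifs <;> omega

/- ---------- cont facts ---------- -/
lemma sub_cont_bN (n : ℕ) (hn : 2 ≤ n) (X : Fin n → ℤ) :
    (fun k => X k - cont n (bN n) k) = sh n X (-1) := by
  funext k; have hk := k.isLt; simp only [cont, bN, sh, Fin.val_mk]; split_ifs <;> (try simp_all) <;> omega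
lemma sub_cont_bZ (n : ℕ) (hn : 2 ≤ n) (X : Fin n → ℤ) :
    (fun k => X k - cont n (bZ n) k) = X := by
  funext k; have hk := k.isLt; simp only [cont, bZ, Fin.val_mk]; split_ifs <;> (try simp_all) <;> omega
lemma sub_cont_bNB (n : ℕ) (hn : 2 ≤ n) (X : Fin n → ℤ) :
    (fun k => X k - cont n (bNB n) k) = sh n X 1 := by
  funext k; have hk := k.isLt; simp only [cont, bNB, sh, Fin.val_mk]; split_ifs <;> (try simp_all) <;> omega

lemma restarg (n : ℕ) (hn : 2 ≤ n) (d : Fin (2*n+2))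
    (hd1 : (d:ℕ) ≠ n-1) (hd3 : (d:ℕ) ≠ n+1) (X : Fin n → ℤ) (a a' : ℤ) (haa : a + a' = 0) :
    (fun k => sh n (rr n X) a k - cont n d k) = rr n (fun k => sh n X a' k - cont n d k) := by
  funext k; have hk := k.isLt; have hd := d.isLt
  simp only [sh, rr, cont]; split_ifs <;> (try simp_all) <;> omega
lemma restarg0 (n : ℕ) (hn : 2 ≤ n) (d : Fin (2*n+2))
    (hd1 : (d:ℕ) ≠ n-1) (hd3 : (d:ℕ) ≠ n+1) (X : Fin n → ℤ) :
    (fun k => rr n X k - cont n d k) = rr n (fun k => X k - cont n d k) := by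
  funext k; have hk := k.isLt; have hd := d.isLt
  simp only [rr, cont]; split_ifs <;> (try simp_all) <;> omega

/- ---------- sum splitting ---------- -/
lemma sum_split (n : ℕ) (hn : 2 ≤ n) (F : Fin (2*n+2) → RatFunc ℚ) :
    (∑ c, F c) = F (bN n) + F (bZ n) + F (bNB n) + ∑ c ∈ Tset n, F c := by
  have hsplit := Finset.sum_filter_add_sum_filter_not Finset.univ
    (fun c : Fin (2*n+2) => (c:ℕ) = n-1 ∨ (c:ℕ) = n ∨ (c:ℕ) = n+1) F
  have h1 : Finset.univ.filter
      (fun c : Fin (2*n+2) => (c:ℕ) = n-1 ∨ (c:ℕ) = n ∨ (c:ℕ) = n+1)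
      = {bN n, bZ n, bNB n} := by
    ext c
    simp only [Finset.mem_filter, Finset.mem_univ, true_and, Finset.mem_insert,
      Finset.mem_singleton, Fin.ext_iff, bN, bZ, bNB]
    omega
  have h2 : Finset.univ.filter
      (fun c : Fin (2*n+2) => ¬((c:ℕ) = n-1 ∨ (c:ℕ) = n ∨ (c:ℕ) = n+1)) = Tset n := by
    ext c
    simp only [Finset.mem_filter, Finset.mem_univ, true_and, Tset]
    omega
  rw [← hsplit, h1, h2]
  rw [Finset.sum_insert (by
    simp only [Finset.mem_insert, Finset.mem_singleton, Fin.ext_iff, bN, bZ, bNB]; omega)]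
  rw [Finset.sum_insert (by
    simp only [Finset.mem_singleton, Fin.ext_iff, bZ, bNB]; omega)]
  rw [Finset.sum_singleton]
  ring

/- ---------- g lemmas ---------- -/
lemma g_zero (n : ℕ) (b : Fin (2*n+2)) (μ : Fin n → ℤ) :
    g n 0 b μ = if (∀ k, μ k = 0) then 1 else 0 := by
  rw [g, Finset.sum_filter]
  rw [Finset.sum_eq_single_of_mem (fun _ => b) (Finset.mem_univ _)]
  · simp [eq_comm]
  · intro p _ hp
    have h : ¬ (p (Fin.last 0) = b) := fun h => hp (funext fun i => by
      have hi : i = Fin.last 0 := by ext; omega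
      rw [hi]; exact h)
    simp only [h, false_and, if_false]

lemma g_succ (n j : ℕ) (b : Fin (2*n+2)) (μ : Fin n → ℤ) :
    g n (j+1) b μ
      = ∑ c : Fin (2*n+2), q ^ (((j:ℤ)+1) * H n b c) * g n j c (fun k => μ k - cont n c k) := by
  simp only [g, Finset.sum_filter, Finset.mul_sum]
  rw [Finset.sum_comm]
  rw [← Equiv.sum_comp (Fin.insertNthEquiv (fun _ => Fin (2*n+2)) (Fin.last (j+1)))]
  rw [Fintype.sum_prod_type]
  rw [Finset.sum_comm]
  apply Finset.sum_congr rfl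
  intro p' _
  rw [Finset.sum_eq_single_of_mem b (Finset.mem_univ _) ?_,
      Finset.sum_eq_single_of_mem (p' (Fin.last j)) (Finset.mem_univ _) ?_]
  rotate_left
  · intro c _ hc
    rw [if_neg, mul_zero]
    exact fun h => hc h.1.symm
  · intro x _ hx
    rw [if_neg]
    intro h
    apply hx
    have := h.1
    simpa [Fin.insertNthEquiv_apply, Fin.insertNth_last', Fin.snoc_last] using this
  simp only [Fin.insertNthEquiv_apply, Fin.insertNth_last', Fin.sum_univ_castSucc,
    Fin.snoc_last, Fin.succ_last, Fin.succ_castSucc, Fin.snoc_castSucc, Fin.val_last,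
    Fin.coe_castSucc, eq_self_iff_true, true_and]
  by_cases hcond : ∀ k : Fin n, (∑ i : Fin j, cont n (p' i.castSucc) k) = μ k - cont n (p' (Fin.last j)) k
  · rw [if_pos hcond, if_pos, zpow_add₀ q_ne_zero, mul_comm]
    intro k
    have := hcond k
    omega
  · rw [if_neg hcond, if_neg, mul_zero]
    intro hc
    apply hcond
    intro k
    have := hc k
    omega

/- ---------- rest-sum conversions ---------- -/
lemma rest_conv_w (n j : ℕ) (b b' : Fin (2*n+2))
    (hw : ∀ d ∈ Tset n, H n b d = H n b' d) (v : Fin (2*n+2) → RatFunc ℚ) :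
    ∑ d ∈ Tset n, q ^ (((j:ℤ)+1) * H n b d) * v d
      = ∑ d ∈ Tset n, q ^ (((j:ℤ)+1) * H n b' d) * v d := by
  apply Finset.sum_congr rfl; intro d hd; rw [hw d hd]

lemma rest_conv (n j : ℕ) (hn : 2 ≤ n)
    (ih1 : ∀ c : Fin (2*n+2), (c:ℕ) ≠ n-1 → (c:ℕ) ≠ n → (c:ℕ) ≠ n+1 →
      ∀ μ : Fin n → ℤ, g n j c μ = g n j c (rr n μ))
    (b b' : Fin (2*n+2)) (hw : ∀ d ∈ Tset n, H n b d = H n b' d)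
    (X : Fin n → ℤ) (a a' : ℤ) (haa : a + a' = 0) :
    ∑ d ∈ Tset n, q ^ (((j:ℤ)+1) * H n b d) * g n j d (fun k => sh n (rr n X) a k - cont n d k)
      = ∑ d ∈ Tset n, q ^ (((j:ℤ)+1) * H n b' d) * g n j d (fun k => sh n X a' k - cont n d k) := by
  apply Finset.sum_congr rfl; intro d hd
  have hd' := hd
  simp only [Tset, Finset.mem_filter] at hd'
  obtain ⟨-, h1, h2, h3⟩ := hd'
  rw [hw d hd, restarg n hn d h1 h3 X a a' haa, ← ih1 d h1 h2 h3]

lemma rest_conv0 (n j : ℕ) (hn : 2 ≤ n)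
    (ih1 : ∀ c : Fin (2*n+2), (c:ℕ) ≠ n-1 → (c:ℕ) ≠ n → (c:ℕ) ≠ n+1 →
      ∀ μ : Fin n → ℤ, g n j c μ = g n j c (rr n μ))
    (b b' : Fin (2*n+2)) (hw : ∀ d ∈ Tset n, H n b d = H n b' d) (X : Fin n → ℤ) :
    ∑ d ∈ Tset n, q ^ (((j:ℤ)+1) * H n b d) * g n j d (fun k => rr n X k - cont n d k)
      = ∑ d ∈ Tset n, q ^ (((j:ℤ)+1) * H n b' d) * g n j d (fun k => X k - cont n d k) := by
  apply Finset.sum_congr rfl; intro d hd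
  have hd' := hd
  simp only [Tset, Finset.mem_filter] at hd'
  obtain ⟨-, h1, h2, h3⟩ := hd'
  rw [hw d hd, restarg0 n hn d h1 h3 X, ← ih1 d h1 h2 h3]

lemma hw_of (n j : ℕ) (hn : 2 ≤ n) (b b' : Fin (2*n+2))
    (hb : (b:ℕ) = n-1 ∨ (b:ℕ) = n ∨ (b:ℕ) = n+1)
    (hb' : (b':ℕ) = n-1 ∨ (b':ℕ) = n ∨ (b':ℕ) = n+1) :
    ∀ d ∈ Tset n, H n b d = H n b' d := by
  intro d hd
  simp only [Tset, Finset.mem_filter] at hd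
  obtain ⟨-, h1, h2, h3⟩ := hd
  exact H_left_uniform n hn b b' d hb hb' h1 h2 h3

lemma hbN (n : ℕ) (hn : 2 ≤ n) : ((bN n : Fin (2*n+2)):ℕ) = n-1 ∨ ((bN n : Fin (2*n+2)):ℕ) = n ∨ ((bN n : Fin (2*n+2)):ℕ) = n+1 := by
  exact Or.inl rfl
lemma hbZ (n : ℕ) (hn : 2 ≤ n) : ((bZ n : Fin (2*n+2)):ℕ) = n-1 ∨ ((bZ n : Fin (2*n+2)):ℕ) = n ∨ ((bZ n : Fin (2*n+2)):ℕ) = n+1 := by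
  exact Or.inr (Or.inl rfl)
lemma hbNB (n : ℕ) (hn : 2 ≤ n) : ((bNB n : Fin (2*n+2)):ℕ) = n-1 ∨ ((bNB n : Fin (2*n+2)):ℕ) = n ∨ ((bNB n : Fin (2*n+2)):ℕ) = n+1 := by
  right; right; simp only [bNB, Fin.val_mk]; omega

/- ---------- base-case condition lemmas ---------- -/
lemma zc_rr (n : ℕ) (ν : Fin n → ℤ) (a a' : ℤ) (haa : a + a' = 0) :
    (∀ k, sh n (rr n ν) a k = 0) ↔ (∀ k, sh n ν a' k = 0) := by
  constructor <;> intro h k <;> have := h k <;> simp only [sh, rr] at this ⊢ <;>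
    split_ifs at this ⊢ <;> omega
lemma zc_rr0 (n : ℕ) (ν : Fin n → ℤ) :
    (∀ k, rr n ν k = 0) ↔ (∀ k, ν k = 0) := by
  constructor <;> intro h k <;> have := h k <;> simp only [rr] at this ⊢ <;>
    split_ifs at this ⊢ <;> omega

theorem main123 (n : ℕ) (hn : 2 ≤ n) : ∀ j : ℕ,
    (∀ c : Fin (2*n+2), (c:ℕ) ≠ n-1 → (c:ℕ) ≠ n → (c:ℕ) ≠ n+1 →
      ∀ μ : Fin n → ℤ, g n j c μ = g n j c (rr n μ)) ∧
    (∀ ν : Fin n → ℤ, Uu n j ν = Uu n j (rr n ν)) ∧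
    (∀ ν : Fin n → ℤ,
      g n j (bN n) (sh n ν (-2)) + g n j (bN n) (sh n ν (-1)) + Uu n j (sh n ν 1)
        = g n j (bN n) (sh n (rr n ν) (-2)) + g n j (bN n) (sh n (rr n ν) (-1))
          + Uu n j (sh n ν (-1))) := by
  intro j
  induction j with
  | zero =>
    refine ⟨?_, ?_, ?_⟩
    · intro c _ _ _ μ
      rw [g_zero, g_zero]
      simp only [zc_rr0 n μ]
    · intro ν
      simp only [Uu, g_zero]
      rw [if_congr (zc_rr n ν (-1) 1 (by norm_num)) rfl rfl,
          if_congr (zc_rr0 n ν) rfl rfl,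
          if_congr (zc_rr n ν 1 (-1) (by norm_num)) rfl rfl]
      ring
    · intro ν
      simp only [Uu, g_zero, sh_sh, Int.reduceNeg, Int.reduceAdd, sh_zero]
      rw [if_congr (zc_rr n ν (-2) 2 (by norm_num)) rfl rfl,
          if_congr (zc_rr n ν (-1) 1 (by norm_num)) rfl rfl]
      ring
  | succ j ih =>
    obtain ⟨ih1, ih2, ih3⟩ := ih
    refine ⟨?_, ?_, ?_⟩
    · -- S1 step
      intro c h1 h2 h3 μ
      have hu2 := ih2 μ
      simp only [Uu] at hu2
      rw [g_succ, g_succ]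
      simp only [sum_split n hn]
      simp only [sub_cont_bN n hn, sub_cont_bZ n hn, sub_cont_bNB n hn]
      have hrz : H n c (bZ n) = H n c (bN n) :=
        H_right_uniform n hn (bZ n) (bN n) c (hbZ n hn) (hbN n hn) h1 h2 h3
      have hrb : H n c (bNB n) = H n c (bN n) :=
        H_right_uniform n hn (bNB n) (bN n) c (hbNB n hn) (hbN n hn) h1 h2 h3
      rw [hrz, hrb]
      have hrest :
          (∑ d ∈ Tset n, q ^ (((j:ℤ)+1) * H n c d) * g n j d (fun k => rr n μ k - cont n d k))
            = ∑ d ∈ Tset n, q ^ (((j:ℤ)+1) * H n c d) * g n j d (fun k => μ k - cont n d k) :=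
        rest_conv0 n j hn ih1 c c (fun _ _ => rfl) μ
      linear_combination (q ^ (((j:ℤ)+1) * H n c (bN n))) * hu2 - hrest
    · -- S2 step
      intro ν
      have h2a := ih2 ν
      have h2b := ih2 (sh n ν 1)
      have h2c := ih2 (sh n (rr n ν) 1)
      have h3 := ih3 ν
      simp only [Uu, rr_sh, sh_sh, rr_rr, sh_zero, Int.reduceNeg, Int.reduceAdd,
        neg_neg] at h2a h2b h2c h3
      simp only [Uu]
      simp only [g_succ]
      simp only [sum_split n hn]
      simp only [H_NN n hn, H_NZ n hn, H_NNB n hn, H_ZN n hn, H_ZZ n hn, H_ZNB n hn,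
        H_BN n hn, H_BZ n hn, H_BNB n hn, mul_zero, zpow_zero, one_mul]
      simp only [sub_cont_bN n hn, sub_cont_bZ n hn, sub_cont_bNB n hn, sh_sh,
        Int.reduceNeg, Int.reduceAdd, sh_zero]
      have hr1 : (∑ d ∈ Tset n, q ^ (((j:ℤ)+1) * H n (bN n) d) * g n j d (fun k => sh n (rr n ν) (-1) k - cont n d k))
          = ∑ d ∈ Tset n, q ^ (((j:ℤ)+1) * H n (bNB n) d) * g n j d (fun k => sh n ν 1 k - cont n d k) :=
        rest_conv n j hn ih1 (bN n) (bNB n) (hw_of n j hn _ _ (hbN n hn) (hbNB n hn)) ν (-1) 1 (by norm_num)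
      have hr2 : (∑ d ∈ Tset n, q ^ (((j:ℤ)+1) * H n (bZ n) d) * g n j d (fun k => rr n ν k - cont n d k))
          = ∑ d ∈ Tset n, q ^ (((j:ℤ)+1) * H n (bZ n) d) * g n j d (fun k => ν k - cont n d k) :=
        rest_conv0 n j hn ih1 (bZ n) (bZ n) (fun _ _ => rfl) ν
      have hr3 : (∑ d ∈ Tset n, q ^ (((j:ℤ)+1) * H n (bNB n) d) * g n j d (fun k => sh n (rr n ν) 1 k - cont n d k))
          = ∑ d ∈ Tset n, q ^ (((j:ℤ)+1) * H n (bN n) d) * g n j d (fun k => sh n ν (-1) k - cont n d k) :=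
        rest_conv n j hn ih1 (bNB n) (bN n) (hw_of n j hn _ _ (hbNB n hn) (hbN n hn)) ν 1 (-1) (by norm_num)
      linear_combination (q ^ (((j:ℤ)+1) * 2) - 1) * h3 + h2a + h2b
        - q ^ (((j:ℤ)+1) * 2) * h2c - hr1 - hr2 - hr3
    · -- S3 step
      intro ν
      have h3b := ih3 (sh n ν 1)
      have h2b := ih2 (sh n ν 1)
      have h2c := ih2 (sh n ν 2)
      simp only [Uu, rr_sh, sh_sh, rr_rr, sh_zero, Int.reduceNeg, Int.reduceAdd,
        neg_neg] at h3b h2b h2c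
      simp only [Uu]
      simp only [g_succ]
      simp only [sum_split n hn]
      simp only [H_NN n hn, H_NZ n hn, H_NNB n hn, H_ZN n hn, H_ZZ n hn, H_ZNB n hn,
        H_BN n hn, H_BZ n hn, H_BNB n hn, mul_zero, zpow_zero, one_mul]
      simp only [sub_cont_bN n hn, sub_cont_bZ n hn, sub_cont_bNB n hn, sh_sh,
        Int.reduceNeg, Int.reduceAdd, sh_zero]
      have hrA : (∑ d ∈ Tset n, q ^ (((j:ℤ)+1) * H n (bN n) d) * g n j d (fun k => sh n (rr n ν) (-2) k - cont n d k))
          = ∑ d ∈ Tset n, q ^ (((j:ℤ)+1) * H n (bNB n) d) * g n j d (fun k => sh n ν 2 k - cont n d k) :=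
        rest_conv n j hn ih1 (bN n) (bNB n) (hw_of n j hn _ _ (hbN n hn) (hbNB n hn)) ν (-2) 2 (by norm_num)
      have hrB : (∑ d ∈ Tset n, q ^ (((j:ℤ)+1) * H n (bN n) d) * g n j d (fun k => sh n (rr n ν) (-1) k - cont n d k))
          = ∑ d ∈ Tset n, q ^ (((j:ℤ)+1) * H n (bZ n) d) * g n j d (fun k => sh n ν 1 k - cont n d k) :=
        rest_conv n j hn ih1 (bN n) (bZ n) (hw_of n j hn _ _ (hbN n hn) (hbZ n hn)) ν (-1) 1 (by norm_num)
      have hrC : (∑ d ∈ Tset n, q ^ (((j:ℤ)+1) * H n (bZ n) d) * g n j d (fun k => sh n ν (-1) k - cont n d k))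
          = ∑ d ∈ Tset n, q ^ (((j:ℤ)+1) * H n (bN n) d) * g n j d (fun k => sh n ν (-1) k - cont n d k) :=
        rest_conv_w n j (bZ n) (bN n) (hw_of n j hn _ _ (hbZ n hn) (hbN n hn)) _
      have hrD : (∑ d ∈ Tset n, q ^ (((j:ℤ)+1) * H n (bNB n) d) * g n j d (fun k => ν k - cont n d k))
          = ∑ d ∈ Tset n, q ^ (((j:ℤ)+1) * H n (bN n) d) * g n j d (fun k => ν k - cont n d k) :=
        rest_conv_w n j (bNB n) (bN n) (hw_of n j hn _ _ (hbNB n hn) (hbN n hn)) _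
      linear_combination (q ^ (((j:ℤ)+1) * 2) - 1) * h3b + h2b + h2c
        - hrA - hrB - hrC - hrD


/-- the `m = 2` case of the Weyl-reflection identity for the level-1
perfect crystal of type `D_{n+1}^{(2)}`, for the classical index `i = n` and the element
`b = n` (position `n-1`), with `f_n(n) = 0` (position `n`) and `f_n^2(n) = n̄`
(position `n+1`); the reflection `r_n` sends `μ_n` to `-μ_n`. Here `e_n` is the `n`-th
standard basis vector of `ℤ^n` (index `n-1` of `Fin n`), and `μ[μ_n ↦ a]` replaces the
last entry of `μ` by `a`. -/
theorem statement13 (n : ℕ) (hn : 2 ≤ n) (j : ℕ) (μ : Fin n → ℤ) :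
    g n j ⟨n - 1, by omega⟩ μ +
      g n j ⟨n, by omega⟩
        (fun k : Fin n => μ k + (if (k : ℕ) = n - 1 then 1 else 0)) +
      g n j ⟨n + 1, by omega⟩
        (fun k : Fin n => μ k + (if (k : ℕ) = n - 1 then 2 else 0)) =
    g n j ⟨n - 1, by omega⟩
        (fun k : Fin n => if (k : ℕ) = n - 1 then -μ ⟨n - 1, by omega⟩ - 2 else μ k) +
      g n j ⟨n, by omega⟩
        (fun k : Fin n => if (k : ℕ) = n - 1 then -μ ⟨n - 1, by omega⟩ - 1 else μ k) +
      g n j ⟨n + 1, by omega⟩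
        (fun k : Fin n => if (k : ℕ) = n - 1 then -μ ⟨n - 1, by omega⟩ else μ k) := by
  have h := (main123 n hn j).2.1 (sh n μ 1)
  simp only [Uu, rr_sh, sh_sh, sh_zero, Int.reduceNeg, Int.reduceAdd, neg_neg] at h
  have ebN : bN n = (⟨n - 1, by omega⟩ : Fin (2*n+2)) := rfl
  have ebZ : bZ n = (⟨n, by omega⟩ : Fin (2*n+2)) := rfl
  have ebNB : bNB n = (⟨n + 1, by omega⟩ : Fin (2*n+2)) := by
    apply Fin.ext; simp only [bNB, Fin.val_mk]; omega
  rw [ebN, ebZ, ebNB] at h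
  have e1 : sh n μ 1 = (fun k : Fin n => μ k + (if (k : ℕ) = n - 1 then 1 else 0)) := by
    funext k; simp only [sh]; split_ifs <;> ring
  have e2 : sh n μ 2 = (fun k : Fin n => μ k + (if (k : ℕ) = n - 1 then 2 else 0)) := by
    funext k; simp only [sh]; split_ifs <;> ring
  have e3 : sh n (rr n μ) (-2)
      = (fun k : Fin n => if (k : ℕ) = n - 1 then -μ ⟨n - 1, by omega⟩ - 2 else μ k) := by
    funext k; simp only [sh, rr]
    split_ifs with hk
    · have : k = (⟨n - 1, by omega⟩ : Fin n) := Fin.ext hk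
      rw [this]; ring
    · rfl
  have e4 : sh n (rr n μ) (-1)
      = (fun k : Fin n => if (k : ℕ) = n - 1 then -μ ⟨n - 1, by omega⟩ - 1 else μ k) := by
    funext k; simp only [sh, rr]
    split_ifs with hk
    · have : k = (⟨n - 1, by omega⟩ : Fin n) := Fin.ext hk
      rw [this]; ring
    · rfl
  have e5 : rr n μ
      = (fun k : Fin n => if (k : ℕ) = n - 1 then -μ ⟨n - 1, by omega⟩ else μ k) := by
    funext k; simp only [rr]
    split_ifs with hk
    · have : k = (⟨n - 1, by omega⟩ : Fin n) := Fin.ext hk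
      rw [this]
    · rfl
  rw [← e1, ← e2, ← e3, ← e4, ← e5]
  exact h

end
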